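/- Fix B ≥ 1 and 0 ≤ l < B. Let R_l be the (B−l) × 2B matrix with entries [R_l]_{n,i} = N_{nl} R_{nl}(r_i) for n = l+1,...,B and i = 0,...,2B−1, where r_i are the nodes of the Gaussian quadrature rule of order 2B for the weight e^{-r²} on [0,∞) with weights a_i. Then R_l · diag(a_i r_i²) · R_lᵀ = I_{B−l}, the identity matrix of size B−l. -/

import Mathlib

open MeasureTheory

/-- The generalized Laguerre polynomial `L_k^{(α)}`, via its closed-form expression. -/
noncomputable def glaguerre (α : ℝ) (k : ℕ) (t : ℝ) : ℝ :=
  ∑ j ∈ Finset.range (k + 1),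
    (-1 : ℝ) ^ j / (Nat.factorial j : ℝ) *
      (Real.Gamma ((k : ℝ) + α + 1) /
        (Real.Gamma ((j : ℝ) + α + 1) * (Nat.factorial (k - j) : ℝ))) * t ^ j

/-- The normalized radial SGL function `Q_{nl} = N_{nl} R_{nl}` (zero for `n ≤ l`). -/
noncomputable def Qrad (n l : ℕ) (r : ℝ) : ℝ :=
  if l < n then
    Real.sqrt (2 * (Nat.factorial (n - l - 1) : ℝ) / Real.Gamma ((n : ℝ) + 1/2)) *
      glaguerre ((l : ℝ) + 1/2) (n - l - 1) (r ^ 2) * r ^ l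
  else 0


open Finset


/-- Pascal step for alternating binomial sums. -/
lemma alt_sum_succ (n : ℕ) (f : ℕ → ℝ) :
    ∑ j ∈ range (n + 2), (-1 : ℝ) ^ j * ((n + 1).choose j) * f j
      = -∑ j ∈ range (n + 1), (-1 : ℝ) ^ j * (n.choose j) * (f (j + 1) - f j) := by
  rw [Finset.sum_range_succ' (fun j => (-1 : ℝ) ^ j * ((n + 1).choose j) * f j)]
  have h1 : ∀ j, ((n + 1).choose (j + 1) : ℝ) = (n.choose j : ℝ) + (n.choose (j + 1) : ℝ) := by
    intro j; rw [Nat.choose_succ_succ]; push_cast; ring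
  have : ∑ j ∈ range (n + 1), (-1 : ℝ) ^ (j + 1) * ((n + 1).choose (j + 1)) * f (j + 1)
      = ∑ j ∈ range (n + 1), ((-1 : ℝ) ^ (j + 1) * (n.choose j) * f (j + 1)
        + (-1 : ℝ) ^ (j + 1) * (n.choose (j + 1)) * f (j + 1)) := by
    refine Finset.sum_congr rfl fun j _ => ?_
    rw [h1]; ring
  rw [this, Finset.sum_add_distrib]
  have h2 : ∑ j ∈ range (n + 1), (-1 : ℝ) ^ (j + 1) * (n.choose (j + 1)) * f (j + 1)
      = ∑ j ∈ range (n + 2), (-1 : ℝ) ^ j * (n.choose j) * f j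
        - (-1 : ℝ) ^ 0 * (n.choose 0) * f 0 := by
    rw [Finset.sum_range_succ' (fun j => (-1 : ℝ) ^ j * (n.choose j) * f j)]; ring
  have h3 : ∑ j ∈ range (n + 2), (-1 : ℝ) ^ j * (n.choose j) * f j
      = ∑ j ∈ range (n + 1), (-1 : ℝ) ^ j * (n.choose j) * f j := by
    rw [Finset.sum_range_succ, Nat.choose_succ_self]; simp
  have h4 : -∑ j ∈ range (n + 1), (-1 : ℝ) ^ j * (n.choose j) * (f (j + 1) - f j)
      = (∑ j ∈ range (n + 1), (-1 : ℝ) ^ (j + 1) * (n.choose j) * f (j + 1))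
        + ∑ j ∈ range (n + 1), (-1 : ℝ) ^ j * (n.choose j) * f j := by
    rw [← Finset.sum_add_distrib, ← Finset.sum_neg_distrib]
    exact Finset.sum_congr rfl fun j _ => by ring
  rw [h2, h3, h4]
  simp only [pow_zero, Nat.choose_zero_right, Nat.cast_one, one_mul]
  ring

/-- The key alternating-sum identity for rising factorials. -/
lemma S_val : ∀ (n k : ℕ) (α : ℝ), k ≤ n →
    ∑ j ∈ range (n + 1), (-1 : ℝ) ^ j * (n.choose j) * ∏ i ∈ range k, (α + j + i)
      = if k = n then (-1 : ℝ) ^ n * n.factorial else 0 := by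
  intro n
  induction n with
  | zero =>
    intro k α hk
    interval_cases k
    simp
  | succ n IH =>
    intro k α hk
    have key := alt_sum_succ n (fun j => ∏ i ∈ range k, (α + j + i))
    rw [show n + 1 + 1 = n + 2 from rfl, key]
    rcases Nat.eq_zero_or_pos k with hk0 | hk0
    · subst hk0
      simp [if_neg (Nat.succ_ne_zero n).symm]
    · obtain ⟨m, rfl⟩ := Nat.exists_eq_add_of_le hk0
      -- k = 1 + m
      have hdiff : ∀ j : ℕ, (∏ i ∈ range (1 + m), (α + (j + 1 : ℕ) + i))
          - ∏ i ∈ range (1 + m), (α + j + i)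
          = (1 + m : ℝ) * ∏ i ∈ range m, ((α + 1) + j + i) := by
        intro j
        rw [add_comm 1 m, Finset.prod_range_succ, Finset.prod_range_succ']
        push_cast
        have e1 : ∀ i ∈ range m, (α + (j + 1 : ℝ) + i) = (α + 1) + j + i := by
          intro i _; ring
        have e2 : ∀ i ∈ range m, (α + (j : ℝ) + (i + 1)) = (α + 1) + j + i := by
          intro i _; push_cast; ring
        rw [Finset.prod_congr rfl e1, Finset.prod_congr rfl e2]
        ring
      have : ∑ j ∈ range (n + 1), (-1 : ℝ) ^ j * (n.choose j) *
            ((∏ i ∈ range (1 + m), (α + (j + 1 : ℕ) + i)) - ∏ i ∈ range (1 + m), (α + j + i))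
          = (1 + m : ℝ) * ∑ j ∈ range (n + 1), (-1 : ℝ) ^ j * (n.choose j) *
              ∏ i ∈ range m, ((α + 1) + j + i) := by
        rw [Finset.mul_sum]
        refine Finset.sum_congr rfl fun j _ => ?_
        rw [hdiff j]; ring
      rw [this, IH m (α + 1) (by omega)]
      by_cases hmn : m = n
      · subst hmn
        rw [if_pos rfl, if_pos (by omega)]
        push_cast [Nat.factorial_succ]
        ring
      · rw [if_neg hmn, if_neg (by omega)]
        ring

open MeasureTheory

lemma Gamma_add_nat (x : ℝ) (hx : 0 < x) (k : ℕ) :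
    Real.Gamma (x + k) = Real.Gamma x * ∏ i ∈ range k, (x + i) := by
  induction k with
  | zero => simp
  | succ k IH =>
    have h1 : x + (k + 1 : ℕ) = (x + k) + 1 := by push_cast; ring
    rw [h1, Real.Gamma_add_one (by positivity), IH, Finset.prod_range_succ]
    ring

lemma integrableOn_pow_mul_exp_neg_sq (d : ℕ) :
    IntegrableOn (fun x : ℝ => x ^ d * Real.exp (-x ^ 2)) (Set.Ioi 0) := by
  have h := integrableOn_rpow_mul_exp_neg_mul_sq (b := 1) one_pos
    (s := (d : ℝ)) (neg_one_lt_zero.trans_le (Nat.cast_nonneg d))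
  refine h.congr_fun (fun x hx => ?_) measurableSet_Ioi
  simp only [Real.rpow_natCast]
  norm_num

lemma moment (q : ℕ) :
    ∫ x in Set.Ioi (0 : ℝ), x ^ (2 * q) * Real.exp (-x ^ 2)
      = Real.Gamma ((q : ℝ) + 1 / 2) / 2 := by
  have h := integral_rpow_mul_exp_neg_rpow (p := 2) (q := (2 * q : ℕ))
    two_pos (neg_one_lt_zero.trans_le (Nat.cast_nonneg _))
  have e : ∀ x ∈ Set.Ioi (0 : ℝ),
      x ^ ((2 * q : ℕ) : ℝ) * Real.exp (-x ^ (2 : ℝ)) = x ^ (2 * q) * Real.exp (-x ^ 2) := by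
    intro x hx
    rw [Real.rpow_natCast, Real.rpow_two]
  rw [setIntegral_congr_fun measurableSet_Ioi e] at h
  rw [h]
  have : (((2 * q : ℕ) : ℝ) + 1) / 2 = (q : ℝ) + 1 / 2 := by push_cast; ring
  rw [this]
  ring

/-- Laguerre coefficient. -/
noncomputable def lagc (α : ℝ) (k j : ℕ) : ℝ :=
  (-1 : ℝ) ^ j / (Nat.factorial j : ℝ) *
    (Real.Gamma ((k : ℝ) + α + 1) /
      (Real.Gamma ((j : ℝ) + α + 1) * (Nat.factorial (k - j) : ℝ)))

lemma glaguerre_eq_sum (α : ℝ) (k : ℕ) (t : ℝ) :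
    glaguerre α k t = ∑ j ∈ range (k + 1), lagc α k j * t ^ j := rfl

lemma innerSumL (n j : ℕ) (α : ℝ) (hα : 0 < α) (hj : j ≤ n) :
    ∑ k ∈ range (n + 1), lagc α n k * Real.Gamma ((j : ℝ) + k + α + 1)
      = if j = n then (-1 : ℝ) ^ n * Real.Gamma ((n : ℝ) + α + 1) else 0 := by
  have hterm : ∀ k ∈ range (n + 1),
      lagc α n k * Real.Gamma ((j : ℝ) + k + α + 1)
        = Real.Gamma ((n : ℝ) + α + 1) / (n.factorial : ℝ) *
          ((-1 : ℝ) ^ k * (n.choose k) * ∏ i ∈ range j, ((α + 1) + k + i)) := by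
    intro k hk
    have hkn : k ≤ n := by simp at hk; omega
    rw [show (j : ℝ) + k + α + 1 = ((k : ℝ) + α + 1) + j by ring,
      Gamma_add_nat _ (by positivity) j]
    have hprod : ∀ i ∈ range j, ((k : ℝ) + α + 1 + i) = (α + 1) + k + i := by
      intro i _; ring
    rw [Finset.prod_congr rfl hprod]
    have hC : (n.choose k : ℝ) * (k.factorial : ℝ) * ((n - k).factorial : ℝ)
        = (n.factorial : ℝ) := by
      exact_mod_cast Nat.choose_mul_factorial_mul_factorial hkn
    have hG : Real.Gamma ((k : ℝ) + α + 1) ≠ 0 := by positivity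
    have h1 : (k.factorial : ℝ) ≠ 0 := Nat.cast_ne_zero.mpr k.factorial_ne_zero
    have h2 : ((n - k).factorial : ℝ) ≠ 0 := Nat.cast_ne_zero.mpr (n - k).factorial_ne_zero
    have h3 : (n.factorial : ℝ) ≠ 0 := Nat.cast_ne_zero.mpr n.factorial_ne_zero
    have hC' : (n.choose k : ℝ) = (n.factorial : ℝ) /
        ((k.factorial : ℝ) * ((n - k).factorial : ℝ)) := by
      field_simp
      linear_combination hC
    rw [lagc, hC']
    field_simp
  rw [Finset.sum_congr rfl hterm, ← Finset.mul_sum, S_val n j (α + 1) hj]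
  by_cases h : j = n
  · subst h
    rw [if_pos rfl, if_pos rfl]
    have h3 : (j.factorial : ℝ) ≠ 0 := Nat.cast_ne_zero.mpr j.factorial_ne_zero
    field_simp
  · rw [if_neg h, if_neg h, mul_zero]

lemma double_sum (m n : ℕ) (α : ℝ) (hα : 0 < α) (hmn : m ≤ n) :
    ∑ j ∈ range (m + 1), ∑ k ∈ range (n + 1),
        lagc α m j * lagc α n k * Real.Gamma ((j : ℝ) + k + α + 1)
      = if m = n then Real.Gamma ((n : ℝ) + α + 1) / (n.factorial : ℝ) else 0 := by
  have hswap : ∀ j ∈ range (m + 1),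
      ∑ k ∈ range (n + 1), lagc α m j * lagc α n k * Real.Gamma ((j : ℝ) + k + α + 1)
        = lagc α m j * (if j = n then (-1 : ℝ) ^ n * Real.Gamma ((n : ℝ) + α + 1) else 0) := by
    intro j hj
    have hjm : j ≤ m := by simp at hj; omega
    rw [← innerSumL n j α hα (hjm.trans hmn), Finset.mul_sum]
    exact Finset.sum_congr rfl fun k _ => by ring
  rw [Finset.sum_congr rfl hswap]
  by_cases h : m = n
  · subst h
    rw [if_pos rfl]
    have hps : ∀ j ∈ range (m + 1),
        (lagc α m j * if j = m then (-1 : ℝ) ^ m * Real.Gamma ((m : ℝ) + α + 1) else 0)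
          = if j = m then lagc α m j * ((-1 : ℝ) ^ m * Real.Gamma ((m : ℝ) + α + 1)) else 0 := by
      intro j _; rw [mul_ite, mul_zero]
    rw [Finset.sum_congr rfl hps, Finset.sum_ite_eq' (range (m + 1)) m
      (fun j => lagc α m j * ((-1 : ℝ) ^ m * Real.Gamma ((m : ℝ) + α + 1))),
      if_pos (Finset.self_mem_range_succ m)]
    rw [lagc]
    simp only [Nat.sub_self, Nat.factorial_zero, Nat.cast_one, mul_one]
    have hG : Real.Gamma ((m : ℝ) + α + 1) ≠ 0 := by positivity
    have h3 : (m.factorial : ℝ) ≠ 0 := Nat.cast_ne_zero.mpr m.factorial_ne_zero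
    field_simp
    rw [← pow_mul, Even.neg_one_pow ⟨m, by ring⟩]
  · rw [if_neg h]
    refine Finset.sum_eq_zero fun j hj => ?_
    have hjm : j ≤ m := by simp at hj; omega
    rw [if_neg (by omega), mul_zero]

lemma ortho_int (l mm nn : ℕ) (hmn : mm ≤ nn) :
    ∫ x in Set.Ioi (0 : ℝ),
        (glaguerre ((l : ℝ) + 1 / 2) mm (x ^ 2) * glaguerre ((l : ℝ) + 1 / 2) nn (x ^ 2)
          * x ^ (2 * l + 2)) * Real.exp (-x ^ 2)
      = if mm = nn then
          Real.Gamma ((nn : ℝ) + ((l : ℝ) + 1 / 2) + 1) / (2 * nn.factorial) else 0 := by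
  set α : ℝ := (l : ℝ) + 1 / 2 with hαdef
  have hα : 0 < α := by positivity
  have hpt : ∀ x : ℝ,
      (glaguerre α mm (x ^ 2) * glaguerre α nn (x ^ 2) * x ^ (2 * l + 2)) * Real.exp (-x ^ 2)
        = ∑ p ∈ Finset.range (mm + 1) ×ˢ Finset.range (nn + 1),
            (lagc α mm p.1 * lagc α nn p.2) * (x ^ (2 * (p.1 + p.2 + l + 1)) * Real.exp (-x ^ 2)) := by
    intro x
    rw [glaguerre_eq_sum, glaguerre_eq_sum, Finset.sum_mul_sum, ← Finset.sum_product',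
      Finset.sum_mul, Finset.sum_mul]
    refine Finset.sum_congr rfl fun p _ => ?_
    have hx : (x ^ 2) ^ p.1 * (x ^ 2) ^ p.2 * x ^ (2 * l + 2) = x ^ (2 * (p.1 + p.2 + l + 1)) := by
      rw [← pow_mul, ← pow_mul, ← pow_add, ← pow_add]
      congr 1
      ring
    rw [← hx]
    ring
  rw [setIntegral_congr_fun measurableSet_Ioi (fun x _ => hpt x)]
  rw [integral_finset_sum _ (fun p _ =>
    (integrableOn_pow_mul_exp_neg_sq (2 * (p.1 + p.2 + l + 1))).const_mul _)]
  have : ∀ p ∈ Finset.range (mm + 1) ×ˢ Finset.range (nn + 1),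
      ∫ x in Set.Ioi (0 : ℝ),
          (lagc α mm p.1 * lagc α nn p.2) * (x ^ (2 * (p.1 + p.2 + l + 1)) * Real.exp (-x ^ 2))
        = lagc α mm p.1 * lagc α nn p.2 * Real.Gamma ((p.1 : ℝ) + p.2 + α + 1) / 2 := by
    intro p _
    rw [MeasureTheory.integral_const_mul, moment]
    have : ((p.1 + p.2 + l + 1 : ℕ) : ℝ) + 1 / 2 = (p.1 : ℝ) + p.2 + α + 1 := by
      push_cast [hαdef]; ring
    rw [this]; ring
  rw [Finset.sum_congr rfl this]
  have : ∑ p ∈ Finset.range (mm + 1) ×ˢ Finset.range (nn + 1),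
      lagc α mm p.1 * lagc α nn p.2 * Real.Gamma ((p.1 : ℝ) + p.2 + α + 1) / 2
      = (∑ j ∈ Finset.range (mm + 1), ∑ k ∈ Finset.range (nn + 1),
          lagc α mm j * lagc α nn k * Real.Gamma ((j : ℝ) + k + α + 1)) / 2 := by
    rw [← Finset.sum_div, Finset.sum_product]
  rw [this, double_sum mm nn α hα hmn]
  by_cases h : mm = nn
  · rw [if_pos h, if_pos h]
    ring
  · rw [if_neg h, if_neg h, zero_div]

lemma lag_expand (α : ℝ) (l mm nn : ℕ) (x : ℝ) :
    glaguerre α mm (x ^ 2) * glaguerre α nn (x ^ 2) * x ^ (2 * l + 2)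
      = ∑ q ∈ Finset.range (mm + 1) ×ˢ Finset.range (nn + 1),
          (lagc α mm q.1 * lagc α nn q.2) * x ^ (2 * (q.1 + q.2 + l + 1)) := by
  rw [glaguerre_eq_sum, glaguerre_eq_sum, Finset.sum_mul_sum, ← Finset.sum_product',
    Finset.sum_mul]
  refine Finset.sum_congr rfl fun q _ => ?_
  have hx : (x ^ 2) ^ q.1 * (x ^ 2) ^ q.2 * x ^ (2 * l + 2) = x ^ (2 * (q.1 + q.2 + l + 1)) := by
    rw [← pow_mul, ← pow_mul, ← pow_add, ← pow_add]
    congr 1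
    ring
  rw [← hx]
  ring

lemma Qrad_eq (l mm : ℕ) (x : ℝ) :
    Qrad (l + 1 + mm) l x
      = Real.sqrt (2 * (mm.factorial : ℝ) / Real.Gamma ((mm : ℝ) + ((l : ℝ) + 1 / 2) + 1)) *
          glaguerre ((l : ℝ) + 1 / 2) mm (x ^ 2) * x ^ l := by
  have h1 : l + 1 + mm - l - 1 = mm := by omega
  have h2 : ((l + 1 + mm : ℕ) : ℝ) + 1 / 2 = (mm : ℝ) + ((l : ℝ) + 1 / 2) + 1 := by
    push_cast; ring
  rw [Qrad, if_pos (by omega), h1, h2]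

lemma quad_entry (B l : ℕ) (hl : l < B) (r a : Fin (2 * B) → ℝ)
    (hquad : ∀ p : Polynomial ℝ, p.natDegree ≤ 4 * B - 1 →
      ∫ x in Set.Ioi (0 : ℝ), p.eval x * Real.exp (-x ^ 2) = ∑ i, a i * p.eval (r i))
    (mm nn : ℕ) (hm : mm < B - l) (hn : nn < B - l) (hmn : mm ≤ nn) :
    ∑ i, Qrad (l + 1 + mm) l (r i) * (a i * r i ^ 2) * Qrad (l + 1 + nn) l (r i)
      = if mm = nn then 1 else 0 := by
  set α : ℝ := (l : ℝ) + 1 / 2 with hαdef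
  set Nm : ℝ := Real.sqrt (2 * (mm.factorial : ℝ) / Real.Gamma ((mm : ℝ) + α + 1)) with hNm
  set Nn : ℝ := Real.sqrt (2 * (nn.factorial : ℝ) / Real.Gamma ((nn : ℝ) + α + 1)) with hNn
  set p : Polynomial ℝ := ∑ q ∈ Finset.range (mm + 1) ×ˢ Finset.range (nn + 1),
      Polynomial.C (Nm * Nn * (lagc α mm q.1 * lagc α nn q.2)) *
        Polynomial.X ^ (2 * (q.1 + q.2 + l + 1)) with hp
  have hdeg : p.natDegree ≤ 4 * B - 1 := by
    refine Polynomial.natDegree_sum_le_of_forall_le _ _ fun q hq => ?_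
    refine (Polynomial.natDegree_C_mul_le _ _).trans ?_
    rw [Polynomial.natDegree_X_pow]
    simp only [Finset.mem_product, Finset.mem_range] at hq
    omega
  have heval : ∀ x : ℝ, p.eval x
      = Nm * Nn * (glaguerre α mm (x ^ 2) * glaguerre α nn (x ^ 2) * x ^ (2 * l + 2)) := by
    intro x
    rw [hp, Polynomial.eval_finset_sum, lag_expand, Finset.mul_sum]
    refine Finset.sum_congr rfl fun q _ => ?_
    simp only [Polynomial.eval_mul, Polynomial.eval_C, Polynomial.eval_pow, Polynomial.eval_X]
    ring
  have hsum : ∑ i, Qrad (l + 1 + mm) l (r i) * (a i * r i ^ 2) * Qrad (l + 1 + nn) l (r i)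
      = ∑ i, a i * p.eval (r i) := by
    refine Finset.sum_congr rfl fun i _ => ?_
    rw [heval, Qrad_eq, Qrad_eq, ← hαdef, ← hNm, ← hNn,
      show 2 * l + 2 = l + l + 2 from by ring, pow_add, pow_add]
    ring
  have hint : ∫ x in Set.Ioi (0 : ℝ), p.eval x * Real.exp (-x ^ 2)
      = Nm * Nn * (if mm = nn then Real.Gamma ((nn : ℝ) + α + 1) / (2 * nn.factorial) else 0) := by
    have : ∀ x ∈ Set.Ioi (0 : ℝ), p.eval x * Real.exp (-x ^ 2)
        = Nm * Nn * ((glaguerre α mm (x ^ 2) * glaguerre α nn (x ^ 2) * x ^ (2 * l + 2))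
            * Real.exp (-x ^ 2)) := by
      intro x _
      rw [heval]; ring
    rw [setIntegral_congr_fun measurableSet_Ioi this, MeasureTheory.integral_const_mul,
      ortho_int l mm nn hmn]
  rw [hsum, ← hquad p hdeg, hint]
  by_cases h : mm = nn
  · subst h
    rw [if_pos rfl, if_pos rfl]
    have hG : 0 < Real.Gamma ((mm : ℝ) + α + 1) := Real.Gamma_pos_of_pos (by positivity)
    have hfac : (0 : ℝ) < (mm.factorial : ℝ) := by exact_mod_cast mm.factorial_pos
    have hNN : Nm * Nn = 2 * (mm.factorial : ℝ) / Real.Gamma ((mm : ℝ) + α + 1) := by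
      rw [hNm, hNn, Real.mul_self_sqrt (by positivity)]
    rw [hNN]
    field_simp
  · rw [if_neg h, if_neg h, mul_zero]

theorem drt_matrix_identity (B l : ℕ) (hB : 1 ≤ B) (hl : l < B)
    (r a : Fin (2 * B) → ℝ)
    (hquad : ∀ p : Polynomial ℝ, p.natDegree ≤ 4 * B - 1 →
      ∫ x in Set.Ioi (0:ℝ), p.eval x * Real.exp (-x ^ 2) = ∑ i, a i * p.eval (r i)) :
    (Matrix.of fun (n : Fin (B - l)) (i : Fin (2 * B)) => Qrad (l + 1 + (n : ℕ)) l (r i)) *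
        Matrix.diagonal (fun i => a i * (r i) ^ 2) *
        (Matrix.of fun (n : Fin (B - l)) (i : Fin (2 * B)) =>
          Qrad (l + 1 + (n : ℕ)) l (r i)).transpose
      = (1 : Matrix (Fin (B - l)) (Fin (B - l)) ℝ) := by
  ext m n
  rw [Matrix.mul_apply]
  simp only [Matrix.mul_diagonal, Matrix.transpose_apply, Matrix.of_apply, Matrix.one_apply]
  rcases le_total (m : ℕ) (n : ℕ) with h | h
  · rw [quad_entry B l hl r a hquad m n m.isLt n.isLt h]
    simp [Fin.val_eq_val]
  · have key := quad_entry B l hl r a hquad n m n.isLt m.isLt h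
    have e : ∑ i, Qrad (l + 1 + (m : ℕ)) l (r i) * (a i * r i ^ 2) * Qrad (l + 1 + (n : ℕ)) l (r i)
        = ∑ i, Qrad (l + 1 + (n : ℕ)) l (r i) * (a i * r i ^ 2) * Qrad (l + 1 + (m : ℕ)) l (r i) :=
      Finset.sum_congr rfl fun i _ => by ring
    rw [e, key]
    by_cases hmn : m = n
    · rw [if_pos (by rw [hmn]), if_pos hmn]
    · rw [if_neg (fun hc => hmn (Fin.ext hc.symm)), if_neg hmn]
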